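/- arXiv:2410.06164 — 5 statements merged into one kernel-verified Lean document; each statement's English description precedes it below -/
import Mathlib

section
/- Let M be a compact metric space, f : M × M → ℝ a continuous function, and (Ω, P) a probability space. Let (X_k)_{k≥1} be an i.i.d. sequence of M-valued random variables, and let (p_N) be a sequence of measurable maps Ω → M converging almost surely to a point p ∈ M. Then (1/N) Σ_{k=1}^N f(p_N, X_k) → E[f(p, X_1)] almost surely as N → ∞. -/
open MeasureTheory Filter ProbabilityTheory

/-- Plug-in strong law of large numbers with a random base point: for `f` continuous on the
compact product `M × M`, an i.i.d. sequence `(X_k)` of `M`-valued random variables and base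
points `p_N → p` a.s., the averages `(1/N) Σ_{k=1}^N f(p_N, X_k)` converge a.s. to
`E[f(p, X_1)]`. -/
theorem plugin_slln
    {M : Type*} [MetricSpace M] [CompactSpace M]
    [MeasurableSpace M] [BorelSpace M]
    (f : M × M → ℝ) (hf : Continuous f)
    {Ω : Type*} [MeasurableSpace Ω] (P : Measure Ω) [IsProbabilityMeasure P]
    (X : ℕ → Ω → M) (hX : ∀ k, Measurable (X k))
    (hindep : iIndepFun X P)
    (hident : ∀ k, IdentDistrib (X k) (X 0) P P)
    (pN : ℕ → Ω → M) (hpN : ∀ N, Measurable (pN N)) (p : M)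
    (hconv : ∀ᵐ ω ∂P, Tendsto (fun N => pN N ω) atTop (nhds p)) :
    ∀ᵐ ω ∂P, Tendsto (fun N : ℕ => (∑ k ∈ Finset.range N, f (pN N ω, X k ω)) / N)
      atTop (nhds (∫ ω', f (p, X 0 ω') ∂P)) := by
  have : Nonempty M := ⟨p⟩
  set g : M → ℝ := fun x => f (p, x) with hg
  have hgc : Continuous g := hf.comp (continuous_const.prodMk continuous_id)
  have hgm : Measurable g := hgc.measurable
  -- boundedness of g
  obtain ⟨x₀, -, hx₀⟩ := isCompact_univ.exists_isMaxOn Set.univ_nonempty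
    (hgc.abs.continuousOn (s := Set.univ))
  rw [isMaxOn_iff] at hx₀
  -- SLLN for the fixed-point sequence
  have hY : ∀ᵐ ω ∂P, Tendsto (fun n : ℕ => (∑ k ∈ Finset.range n, g (X k ω)) / n)
      atTop (nhds (∫ ω', g (X 0 ω') ∂P)) := by
    apply strong_law_ae_real (fun k ω => g (X k ω))
    · refine Integrable.mono' (integrable_const (|g x₀|))
        (hgm.comp (hX 0)).aestronglyMeasurable ?_
      exact Filter.Eventually.of_forall fun ω => by
        simpa using hx₀ (X 0 ω) (Set.mem_univ _)
    · intro i j hij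
      exact ((hindep.indepFun hij).comp hgm hgm)
    · intro i
      exact (hident i).comp hgm
  -- uniform continuity of f
  have huc : UniformContinuous f := CompactSpace.uniformContinuous_of_continuous hf
  filter_upwards [hY, hconv] with ω hYω hconvω
  have hdiff : Tendsto (fun N : ℕ =>
      (∑ k ∈ Finset.range N, f (pN N ω, X k ω)) / N
        - (∑ k ∈ Finset.range N, g (X k ω)) / N) atTop (nhds 0) := by
    rw [NormedAddCommGroup.tendsto_nhds_zero]
    intro ε hε
    obtain ⟨δ, hδ, hδ'⟩ := Metric.uniformContinuous_iff.1 huc (ε / 2) (half_pos hε)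
    have h1 : ∀ᶠ N in atTop, dist (pN N ω) p < δ :=
      Metric.tendsto_nhds.1 hconvω δ hδ
    filter_upwards [h1, eventually_ge_atTop 1] with N hN hN1
    have key : ∀ k ∈ Finset.range N, ‖f (pN N ω, X k ω) - g (X k ω)‖ ≤ ε / 2 := by
      intro k _
      have : dist ((pN N ω, X k ω) : M × M) (p, X k ω) < δ := by
        rw [Prod.dist_eq]
        simp only [dist_self]
        exact max_lt hN hδ
      have := hδ' this
      rw [Real.dist_eq] at this
      exact le_of_lt this
    have hsum : ‖∑ k ∈ Finset.range N, (f (pN N ω, X k ω) - g (X k ω))‖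
        ≤ N * (ε / 2) := by
      calc ‖∑ k ∈ Finset.range N, (f (pN N ω, X k ω) - g (X k ω))‖
          ≤ ∑ k ∈ Finset.range N, ‖f (pN N ω, X k ω) - g (X k ω)‖ :=
            norm_sum_le _ _
        _ ≤ ∑ _k ∈ Finset.range N, (ε / 2) := Finset.sum_le_sum key
        _ = N * (ε / 2) := by simp [mul_comm]
    have hNpos : (0 : ℝ) < N := by exact_mod_cast hN1
    calc ‖(∑ k ∈ Finset.range N, f (pN N ω, X k ω)) / N
            - (∑ k ∈ Finset.range N, g (X k ω)) / N‖
        = ‖∑ k ∈ Finset.range N, (f (pN N ω, X k ω) - g (X k ω))‖ / N := by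
          rw [div_sub_div_same, ← Finset.sum_sub_distrib, norm_div,
            Real.norm_natCast]
      _ ≤ (N * (ε / 2)) / N := by gcongr
      _ = ε / 2 := mul_div_cancel_left₀ _ hNpos.ne'
      _ < ε := half_lt_self hε
  have := hdiff.add hYω
  simpa using this
end

section
/- Let M be a compact metric space, f, g : M × M → ℝ continuous functions, and (Ω, P) a probability space. Let ((X_k, Y_k))_{k≥1} be an i.i.d. sequence of (M × M)-valued random variables, and let (p_N) be a sequence of measurable maps Ω → M converging almost surely to a point p ∈ M. Then (1/N) Σ_{k=1}^N f(p_N, X_k) · g(p_N, Y_k) → E[f(p, X_1) · g(p, Y_1)] almost surely as N → ∞. -/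
open MeasureTheory Filter ProbabilityTheory

theorem plugin_slln_aux
    {M : Type*} [MetricSpace M] [CompactSpace M]
    {E : Type*} [MetricSpace E] [CompactSpace E] [MeasurableSpace E] [BorelSpace E]
    (H : M × E → ℝ) (hH : Continuous H)
    {Ω : Type*} [MeasurableSpace Ω] (P : Measure Ω) [IsProbabilityMeasure P]
    (Z : ℕ → Ω → E) (hZ : ∀ k, Measurable (Z k))
    (hindep : Pairwise (Function.onFun (fun A B => IndepFun A B P) Z))
    (hident : ∀ k, IdentDistrib (Z k) (Z 0) P P)
    (pN : ℕ → Ω → M) (p : M)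
    (hconv : ∀ᵐ ω ∂P, Tendsto (fun N => pN N ω) atTop (nhds p)) :
    ∀ᵐ ω ∂P, Tendsto (fun N : ℕ => (∑ k ∈ Finset.range N, H (pN N ω, Z k ω)) / N)
      atTop (nhds (∫ ω', H (p, Z 0 ω') ∂P)) := by
  obtain ⟨s, s_count, s_dense⟩ := TopologicalSpace.exists_countable_dense M
  -- boundedness of H
  obtain ⟨C, hC⟩ : ∃ C, ∀ x, ‖H x‖ ≤ C := by
    obtain ⟨C, hC⟩ := (isCompact_range (hH.norm)).bddAbove
    exact ⟨C, fun x => hC (Set.mem_range_self x)⟩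
  have hmeas : ∀ q : M, Measurable (fun z : E => H (q, z)) :=
    fun q => (hH.comp (continuous_const.prodMk continuous_id)).measurable
  have hint : ∀ q : M, Integrable (fun ω => H (q, Z 0 ω)) P := by
    intro q
    refine (integrable_const C).mono' (((hmeas q).comp (hZ 0)).aestronglyMeasurable) ?_
    exact Filter.Eventually.of_forall fun ω => hC _
  have law : ∀ q : M, ∀ᵐ ω ∂P, Tendsto (fun n : ℕ => (∑ k ∈ Finset.range n, H (q, Z k ω)) / n)
      atTop (nhds (∫ ω', H (q, Z 0 ω') ∂P)) := by
    intro q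
    exact strong_law_ae_real (fun k ω => H (q, Z k ω)) (hint q)
      (fun i j hij => (hindep hij).comp (hmeas q) (hmeas q))
      (fun k => (hident k).comp (hmeas q))
  have laws : ∀ᵐ ω ∂P, ∀ q ∈ s, Tendsto (fun n : ℕ => (∑ k ∈ Finset.range n, H (q, Z k ω)) / n)
      atTop (nhds (∫ ω', H (q, Z 0 ω') ∂P)) := (ae_ball_iff s_count).2 fun q _ => law q
  filter_upwards [laws, hconv] with ω hω1 hω2
  rw [Metric.tendsto_atTop]
  intro ε εpos
  have ε4 : (0:ℝ) < ε/4 := by linarith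
  obtain ⟨δ, δpos, hδ⟩ := Metric.uniformContinuous_iff.1
    (CompactSpace.uniformContinuous_of_continuous hH) (ε/4) ε4
  have key : ∀ q q' : M, dist q q' < δ → ∀ z : E, |H (q, z) - H (q', z)| ≤ ε/4 := by
    intro q q' hqq z
    have heq : dist ((q, z) : M × E) (q', z) = dist q q' := by
      rw [Prod.dist_eq, dist_self]; exact max_eq_left dist_nonneg
    have : dist ((q, z) : M × E) (q', z) < δ := heq ▸ hqq
    have := hδ this
    rw [Real.dist_eq] at this
    exact this.le
  obtain ⟨q, hqs, hpq⟩ := s_dense.exists_dist_lt p (half_pos δpos)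
  have hIab : dist (∫ ω', H (q, Z 0 ω') ∂P) (∫ ω', H (p, Z 0 ω') ∂P) ≤ ε/4 := by
    rw [Real.dist_eq, ← integral_sub (hint q) (hint p)]
    calc |∫ ω', (H (q, Z 0 ω') - H (p, Z 0 ω')) ∂P|
        ≤ (ε/4) * (P Set.univ).toReal := by
          rw [← Real.norm_eq_abs]
          apply norm_integral_le_of_norm_le_const
          apply Filter.Eventually.of_forall
          intro ω'
          have : dist q p < δ := by
            rw [dist_comm] at hpq; linarith [hpq]
          simpa [Real.norm_eq_abs] using key q p this (Z 0 ω')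
      _ = ε/4 := by simp
  have hqlln := hω1 q hqs
  rw [Metric.tendsto_atTop] at hqlln hω2
  obtain ⟨N1, hN1⟩ := hqlln (ε/4) ε4
  obtain ⟨N2, hN2⟩ := hω2 (δ/2) (half_pos δpos)
  refine ⟨max (max N1 N2) 1, fun n hn => ?_⟩
  have hn1 : N1 ≤ n := le_trans (le_trans (le_max_left _ _) (le_max_left _ _)) hn
  have hn2 : N2 ≤ n := le_trans (le_trans (le_max_right _ _) (le_max_left _ _)) hn
  have hn3 : 1 ≤ n := le_trans (le_max_right _ _) hn
  have hnpos : (0:ℝ) < n := by exact_mod_cast hn3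
  have hdq : dist (pN n ω) q < δ := by
    have h1 := hN2 n hn2
    calc dist (pN n ω) q ≤ dist (pN n ω) p + dist p q := dist_triangle _ _ _
      _ < δ/2 + δ/2 := by rw [Real.dist_eq] at *; exact add_lt_add h1 hpq
      _ = δ := by ring
  have havg : dist ((∑ k ∈ Finset.range n, H (pN n ω, Z k ω)) / n)
      ((∑ k ∈ Finset.range n, H (q, Z k ω)) / n) ≤ ε/4 := by
    rw [Real.dist_eq, div_sub_div_same, abs_div, abs_of_pos hnpos, div_le_iff₀ hnpos,
      ← Finset.sum_sub_distrib]
    calc |∑ k ∈ Finset.range n, (H (pN n ω, Z k ω) - H (q, Z k ω))|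
        ≤ ∑ k ∈ Finset.range n, |H (pN n ω, Z k ω) - H (q, Z k ω)| :=
          Finset.abs_sum_le_sum_abs _ _
      _ ≤ ∑ _k ∈ Finset.range n, (ε/4) :=
          Finset.sum_le_sum fun k _ => key _ _ hdq (Z k ω)
      _ = n * (ε/4) := by simp [mul_comm]
      _ = ε/4 * n := by ring
  calc dist ((∑ k ∈ Finset.range n, H (pN n ω, Z k ω)) / n) (∫ ω', H (p, Z 0 ω') ∂P)
      ≤ dist ((∑ k ∈ Finset.range n, H (pN n ω, Z k ω)) / n)
          ((∑ k ∈ Finset.range n, H (q, Z k ω)) / n)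
        + dist ((∑ k ∈ Finset.range n, H (q, Z k ω)) / n) (∫ ω', H (q, Z 0 ω') ∂P)
        + dist (∫ ω', H (q, Z 0 ω') ∂P) (∫ ω', H (p, Z 0 ω') ∂P) := dist_triangle4 _ _ _ _
    _ < ε/4 + ε/4 + ε/4 := by
        have := hN1 n hn1
        linarith [havg, hIab, this]
    _ < ε := by linarith

/-- Product form of the plug-in strong law of large numbers: for `f, g` continuous on the
compact product `M × M`, an i.i.d. sequence of pairs `(X_k, Y_k)` in `M × M` and random base
points `p_N → p` a.s., the averages `(1/N) Σ_{k=1}^N f(p_N, X_k)·g(p_N, Y_k)` converge a.s.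
to `E[f(p, X_1)·g(p, Y_1)]`. -/
theorem plugin_slln_product
    {M : Type*} [MetricSpace M] [CompactSpace M]
    [MeasurableSpace M] [BorelSpace M]
    (f g : M × M → ℝ) (hf : Continuous f) (hg : Continuous g)
    {Ω : Type*} [MeasurableSpace Ω] (P : Measure Ω) [IsProbabilityMeasure P]
    (X Y : ℕ → Ω → M) (hXY : ∀ k, Measurable (fun ω => (X k ω, Y k ω)))
    (hindep : iIndepFun (fun k ω => (X k ω, Y k ω)) P)
    (hident : ∀ k, IdentDistrib (fun ω => (X k ω, Y k ω)) (fun ω => (X 0 ω, Y 0 ω)) P P)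
    (pN : ℕ → Ω → M) (hpN : ∀ N, Measurable (pN N)) (p : M)
    (hconv : ∀ᵐ ω ∂P, Tendsto (fun N => pN N ω) atTop (nhds p)) :
    ∀ᵐ ω ∂P, Tendsto
      (fun N : ℕ => (∑ k ∈ Finset.range N, f (pN N ω, X k ω) * g (pN N ω, Y k ω)) / N)
      atTop (nhds (∫ ω', f (p, X 0 ω') * g (p, Y 0 ω') ∂P)) := by
  have hH : Continuous (fun qz : M × (M × M) => f (qz.1, qz.2.1) * g (qz.1, qz.2.2)) := by
    apply Continuous.mul
    · exact hf.comp (continuous_fst.prodMk (continuous_fst.comp continuous_snd))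
    · exact hg.comp (continuous_fst.prodMk (continuous_snd.comp continuous_snd))
  exact plugin_slln_aux (fun qz : M × (M × M) => f (qz.1, qz.2.1) * g (qz.1, qz.2.2)) hH P
    (fun k ω => (X k ω, Y k ω)) hXY (fun i j hij => hindep.indepFun hij) hident pN p hconv
end

section
/- Let M be a compact metric space, f, g : M × M → ℝ continuous functions, and (Ω, P) a probability space. Let ((X_k, Y_k))_{k≥1} be an i.i.d. sequence of (M × M)-valued random variables, and let (p_N) be a sequence of measurable maps Ω → M converging almost surely to a point p ∈ M. Define the empirical covariance Ĉ_N = (1/N) Σ_{k=1}^N f(p_N, X_k) g(p_N, Y_k) − ((1/N) Σ_{k=1}^N f(p_N, X_k)) · ((1/N) Σ_{k=1}^N g(p_N, Y_k)). Then Ĉ_N → E[f(p, X_1) g(p, Y_1)] − E[f(p, X_1)] · E[g(p, Y_1)] almost surely as N → ∞. -/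
open MeasureTheory Filter ProbabilityTheory

/-- Auxiliary: SLLN with a continuous kernel evaluated at a random base point
converging a.s. to `p`. -/
lemma aux_slln {M K : Type*} [MetricSpace M] [CompactSpace M]
    [MetricSpace K] [CompactSpace K] [MeasurableSpace K] [BorelSpace K]
    (h : M × K → ℝ) (hh : Continuous h)
    {Ω : Type*} [MeasurableSpace Ω] (P : Measure Ω) [IsProbabilityMeasure P]
    (Z : ℕ → Ω → K) (hZ : ∀ k, Measurable (Z k))
    (hindep : Pairwise fun i j => IndepFun (Z i) (Z j) P)
    (hident : ∀ k, IdentDistrib (Z k) (Z 0) P P)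
    (pN : ℕ → Ω → M) (p : M)
    (hconv : ∀ᵐ ω ∂P, Tendsto (fun N => pN N ω) atTop (nhds p)) :
    ∀ᵐ ω ∂P, Tendsto (fun N : ℕ => (∑ k ∈ Finset.range N, h (pN N ω, Z k ω)) / N)
      atTop (nhds (∫ ω', h (p, Z 0 ω') ∂P)) := by
  set H : C(M, C(K, ℝ)) := (ContinuousMap.mk h hh).curry with hH
  have hHapp : ∀ (q : M) (z : K), H q z = h (q, z) := fun q z => rfl
  have hmφ : Measurable (fun z : K => h (p, z)) :=
    (hh.comp (continuous_const.prodMk continuous_id)).measurable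
  have hWmeas : ∀ k, Measurable fun ω => h (p, Z k ω) := fun k => hmφ.comp (hZ k)
  have hbound : ∀ z : K, ‖h (p, z)‖ ≤ ‖H p‖ := fun z => (H p).norm_coe_le_norm z
  have hint : Integrable (fun ω => h (p, Z 0 ω)) P := by
    refine ⟨(hWmeas 0).aestronglyMeasurable, ?_⟩
    apply MeasureTheory.HasFiniteIntegral.of_bounded (C := ‖H p‖)
    filter_upwards with ω using hbound _
  have hslln := strong_law_ae_real (fun k ω => h (p, Z k ω)) hint
    (fun i j hij => (hindep hij).comp hmφ hmφ)
    (fun k => (hident k).comp hmφ)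
  filter_upwards [hslln, hconv] with ω h1 h2
  have heps : Tendsto (fun N => ‖H (pN N ω) - H p‖) atTop (nhds 0) := by
    have ht : Tendsto (fun N => H (pN N ω)) atTop (nhds (H p)) :=
      (H.continuous.tendsto p).comp h2
    simpa using tendsto_iff_norm_sub_tendsto_zero.mp ht
  have hdiff : Tendsto (fun N : ℕ => (∑ k ∈ Finset.range N, h (pN N ω, Z k ω)) / N
      - (∑ k ∈ Finset.range N, h (p, Z k ω)) / N) atTop (nhds 0) := by
    apply squeeze_zero_norm _ heps
    intro N
    rw [div_sub_div_same, ← Finset.sum_sub_distrib]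
    rcases Nat.eq_zero_or_pos N with rfl | hN
    · simp
    have hNpos : (0 : ℝ) < N := by exact_mod_cast hN
    have hterm : ∀ k ∈ Finset.range N,
        ‖h (pN N ω, Z k ω) - h (p, Z k ω)‖ ≤ ‖H (pN N ω) - H p‖ := by
      intro k _
      have : h (pN N ω, Z k ω) - h (p, Z k ω) = (H (pN N ω) - H p) (Z k ω) := by
        simp [hHapp]
      rw [this]
      exact (H (pN N ω) - H p).norm_coe_le_norm (Z k ω)
    calc ‖(∑ k ∈ Finset.range N, (h (pN N ω, Z k ω) - h (p, Z k ω))) / (N : ℝ)‖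
        = ‖∑ k ∈ Finset.range N, (h (pN N ω, Z k ω) - h (p, Z k ω))‖ / N := by
          rw [norm_div]; norm_num
      _ ≤ (∑ k ∈ Finset.range N, ‖h (pN N ω, Z k ω) - h (p, Z k ω)‖) / N := by
          gcongr; exact norm_sum_le _ _
      _ ≤ (∑ _k ∈ Finset.range N, ‖H (pN N ω) - H p‖) / N := by
          gcongr with k hk; exact hterm k hk
      _ = ‖H (pN N ω) - H p‖ := by
          rw [Finset.sum_const, Finset.card_range, nsmul_eq_mul]
          field_simp
  have := hdiff.add h1
  simpa using this

/-- Entrywise strong consistency of the sample Riemannian cross-covariance (Theorem 4.3):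
the empirical covariance
`Ĉ_N = (1/N) Σ f(p_N,X_k) g(p_N,Y_k) − ((1/N) Σ f(p_N,X_k))·((1/N) Σ g(p_N,Y_k))`
converges a.s. to `E[f(p,X_1) g(p,Y_1)] − E[f(p,X_1)]·E[g(p,Y_1)]`. -/
theorem empirical_covariance_strong_consistency
    {M : Type*} [MetricSpace M] [CompactSpace M]
    [MeasurableSpace M] [BorelSpace M]
    (f g : M × M → ℝ) (hf : Continuous f) (hg : Continuous g)
    {Ω : Type*} [MeasurableSpace Ω] (P : Measure Ω) [IsProbabilityMeasure P]
    (X Y : ℕ → Ω → M) (hXY : ∀ k, Measurable (fun ω => (X k ω, Y k ω)))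
    (hindep : iIndepFun (fun k ω => (X k ω, Y k ω)) P)
    (hident : ∀ k, IdentDistrib (fun ω => (X k ω, Y k ω)) (fun ω => (X 0 ω, Y 0 ω)) P P)
    (pN : ℕ → Ω → M) (hpN : ∀ N, Measurable (pN N)) (p : M)
    (hconv : ∀ᵐ ω ∂P, Tendsto (fun N => pN N ω) atTop (nhds p)) :
    ∀ᵐ ω ∂P, Tendsto
      (fun N : ℕ =>
        (∑ k ∈ Finset.range N, f (pN N ω, X k ω) * g (pN N ω, Y k ω)) / N -
          ((∑ k ∈ Finset.range N, f (pN N ω, X k ω)) / N) *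
            ((∑ k ∈ Finset.range N, g (pN N ω, Y k ω)) / N))
      atTop
      (nhds ((∫ ω', f (p, X 0 ω') * g (p, Y 0 ω') ∂P) -
        (∫ ω', f (p, X 0 ω') ∂P) * ∫ ω', g (p, Y 0 ω') ∂P)) := by
  set Z : ℕ → Ω → M × M := fun k ω => (X k ω, Y k ω) with hZdef
  have hpind : Pairwise fun i j => IndepFun (Z i) (Z j) P :=
    fun i j hij => hindep.indepFun hij
  have h1 := aux_slln (fun q : M × (M × M) => f (q.1, q.2.1) * g (q.1, q.2.2))
    (((hf.comp (continuous_fst.prodMk (continuous_fst.comp continuous_snd))).mul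
      (hg.comp (continuous_fst.prodMk (continuous_snd.comp continuous_snd)))))
    P Z hXY hpind hident pN p hconv
  have h2 := aux_slln (fun q : M × (M × M) => f (q.1, q.2.1))
    (hf.comp (continuous_fst.prodMk (continuous_fst.comp continuous_snd)))
    P Z hXY hpind hident pN p hconv
  have h3 := aux_slln (fun q : M × (M × M) => g (q.1, q.2.2))
    (hg.comp (continuous_fst.prodMk (continuous_snd.comp continuous_snd)))
    P Z hXY hpind hident pN p hconv
  filter_upwards [h1, h2, h3] with ω t1 t2 t3
  exact t1.sub (t2.mul t3)
end

section
/- Let M be a compact metric space, n a natural number, L : M × M → ℝⁿ a continuous map, and (Ω, P) a probability space. Let ((X_k, Y_k))_{k≥1} be an i.i.d. sequence of (M × M)-valued random variables, and let (p_N) be a sequence of measurable maps Ω → M converging almost surely to a point p ∈ M. Define the sample Riemannian covariance Rcov̂_N = (1/N) Σ_{k=1}^N ⟨L(p_N, X_k), L(p_N, Y_k)⟩ − ⟨(1/N) Σ_{k=1}^N L(p_N, X_k), (1/N) Σ_{k=1}^N L(p_N, Y_k)⟩, where ⟨·,·⟩ is the Euclidean inner product on ℝⁿ. Then Rcov̂_N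 → E[⟨L(p, X_1), L(p, Y_1)⟩] − ⟨E[L(p, X_1)], E[L(p, Y_1)]⟩ almost surely as N → ∞. -/
open MeasureTheory Filter ProbabilityTheory TopologicalSpace
open scoped RealInnerProductSpace

/-- Uniform strong law of large numbers with a moving base point: for `g` continuous
on `M × A` with `M, A` compact, i.i.d. `Z_k`, and random points `q_N → p` a.s., the
averages `(1/N) Σ g(q_N, Z_k)` converge a.s. to `E[g(p, Z_0)]`. -/
lemma aux_uniform_slln {M : Type*} [MetricSpace M] [CompactSpace M]
    {A : Type*} [MetricSpace A] [CompactSpace A] [MeasurableSpace A] [BorelSpace A]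
    {E : Type*} [NormedAddCommGroup E] [NormedSpace ℝ E] [CompleteSpace E]
    [SecondCountableTopology E]
    (g : M × A → E) (hg : Continuous g)
    {Ω : Type*} [MeasurableSpace Ω] (P : Measure Ω) [IsProbabilityMeasure P]
    (Z : ℕ → Ω → A) (hZ : ∀ k, Measurable (Z k))
    (hindep : Pairwise fun i j => IndepFun (Z i) (Z j) P)
    (hident : ∀ k, IdentDistrib (Z k) (Z 0) P P)
    (q : ℕ → Ω → M) (p : M)
    (hq : ∀ᵐ ω ∂P, Tendsto (fun N => q N ω) atTop (nhds p)) :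
    ∀ᵐ ω ∂P, Tendsto (fun N : ℕ => (N : ℝ)⁻¹ • ∑ k ∈ Finset.range N, g (q N ω, Z k ω))
      atTop (nhds (∫ ω', g (p, Z 0 ω') ∂P)) := by
  borelize C(M, E)
  -- curry `g` with the `A`-variable first
  set G : C(A, C(M, E)) :=
    ContinuousMap.curry ⟨fun x : A × M => g (x.2, x.1),
      hg.comp (continuous_snd.prodMk continuous_fst)⟩ with hG
  have hGapp : ∀ a m, (G a) m = g (m, a) := fun a m => rfl
  have hGmeas : Measurable G := G.continuous.measurable
  set W : ℕ → Ω → C(M, E) := fun k ω => G (Z k ω) with hW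
  have hWmeas : ∀ k, Measurable (W k) := fun k => hGmeas.comp (hZ k)
  -- boundedness, hence integrability
  obtain ⟨C, hC⟩ : ∃ C, ∀ a, ‖G a‖ ≤ C := by
    rcases (isCompact_range (continuous_norm.comp G.continuous)).bddAbove with ⟨C, hC⟩
    exact ⟨C, fun a => hC ⟨a, rfl⟩⟩
  have hint : Integrable (W 0) P := by
    refine Integrable.mono' (integrable_const C) (hWmeas 0).aestronglyMeasurable ?_
    exact Filter.Eventually.of_forall fun ω => hC _
  -- SLLN in the Banach space `C(M, E)`
  have hslln := strong_law_ae (μ := P) W hint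
    (fun i j hij => (hindep hij).comp hGmeas hGmeas)
    (fun k => (hident k).comp hGmeas)
  -- identify the evaluation of the limit
  have hIeval : (∫ ω', W 0 ω' ∂P) p = ∫ ω', g (p, Z 0 ω') ∂P := by
    have := (ContinuousMap.evalCLM (M := E) ℝ p).integral_comp_comm hint
    simpa [ContinuousMap.evalCLM, hGapp, W] using this.symm
  filter_upwards [hslln, hq] with ω h1 h2
  have h3 : Tendsto (fun N : ℕ =>
      ((N : ℝ)⁻¹ • ∑ k ∈ Finset.range N, W k ω) (q N ω)) atTop
      (nhds ((∫ ω', W 0 ω' ∂P) p)) :=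
    (ContinuousEval.continuous_eval.tendsto ((∫ ω', W 0 ω' ∂P), p)).comp
      (h1.prodMk_nhds h2)
  rw [hIeval] at h3
  convert h3 using 2 with N
  simp [W, hGapp]

/-- Strong consistency of the sample Riemannian covariance (trace form of Theorem 4.3):
for a continuous map `L : M × M → ℝⁿ` on a compact metric space, i.i.d. pairs `(X_k, Y_k)`
and random base points `p_N → p` a.s., the sample covariance
`(1/N) Σ ⟨L(p_N,X_k), L(p_N,Y_k)⟩ − ⟨(1/N) Σ L(p_N,X_k), (1/N) Σ L(p_N,Y_k)⟩`
converges a.s. to `E[⟨L(p,X_1), L(p,Y_1)⟩] − ⟨E[L(p,X_1)], E[L(p,Y_1)]⟩`. -/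
theorem sample_riemannian_covariance_strong_consistency
    {M : Type*} [MetricSpace M] [CompactSpace M]
    [MeasurableSpace M] [BorelSpace M]
    (n : ℕ) (L : M × M → EuclideanSpace ℝ (Fin n)) (hL : Continuous L)
    {Ω : Type*} [MeasurableSpace Ω] (P : Measure Ω) [IsProbabilityMeasure P]
    (X Y : ℕ → Ω → M) (hXY : ∀ k, Measurable (fun ω => (X k ω, Y k ω)))
    (hindep : iIndepFun (fun k ω => (X k ω, Y k ω)) P)
    (hident : ∀ k, IdentDistrib (fun ω => (X k ω, Y k ω)) (fun ω => (X 0 ω, Y 0 ω)) P P)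
    (pN : ℕ → Ω → M) (hpN : ∀ N, Measurable (pN N)) (p : M)
    (hconv : ∀ᵐ ω ∂P, Tendsto (fun N => pN N ω) atTop (nhds p)) :
    ∀ᵐ ω ∂P, Tendsto
      (fun N : ℕ =>
        (∑ k ∈ Finset.range N, ⟪L (pN N ω, X k ω), L (pN N ω, Y k ω)⟫) / N -
          ⟪(N : ℝ)⁻¹ • ∑ k ∈ Finset.range N, L (pN N ω, X k ω),
            (N : ℝ)⁻¹ • ∑ k ∈ Finset.range N, L (pN N ω, Y k ω)⟫)
      atTop
      (nhds ((∫ ω', ⟪L (p, X 0 ω'), L (p, Y 0 ω')⟫ ∂P) -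
        ⟪∫ ω', L (p, X 0 ω') ∂P, ∫ ω', L (p, Y 0 ω') ∂P⟫)) := by
  set Z : ℕ → Ω → M × M := fun k ω => (X k ω, Y k ω) with hZdef
  have hpind : Pairwise fun i j => IndepFun (Z i) (Z j) P :=
    fun i j hij => hindep.indepFun hij
  have h1 := aux_uniform_slln (E := ℝ)
    (fun x : M × (M × M) => ⟪L (x.1, x.2.1), L (x.1, x.2.2)⟫)
    (Continuous.inner (hL.comp (continuous_fst.prodMk (continuous_fst.comp continuous_snd)))
      (hL.comp (continuous_fst.prodMk (continuous_snd.comp continuous_snd))))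
    P Z hXY hpind hident pN p hconv
  have h2 := aux_uniform_slln (E := EuclideanSpace ℝ (Fin n))
    (fun x : M × (M × M) => L (x.1, x.2.1))
    (hL.comp (continuous_fst.prodMk (continuous_fst.comp continuous_snd)))
    P Z hXY hpind hident pN p hconv
  have h3 := aux_uniform_slln (E := EuclideanSpace ℝ (Fin n))
    (fun x : M × (M × M) => L (x.1, x.2.2))
    (hL.comp (continuous_fst.prodMk (continuous_snd.comp continuous_snd)))
    P Z hXY hpind hident pN p hconv
  filter_upwards [h1, h2, h3] with ω e1 e2 e3
  have := e1.sub (e2.inner e3)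
  convert this using 2 with N
  simp [div_eq_inv_mul, Z]
end

section
/- Let M be a compact metric space, n a natural number, L : M × M → ℝⁿ a continuous map, and (Ω, P) a probability space. Let ((X_k, Y_k))_{k≥1} be an i.i.d. sequence of (M × M)-valued random variables, and let (p_N) be a sequence of measurable maps Ω → M converging almost surely to a point p ∈ M. For two M-valued random variables W, Z set Rcov(W,Z) = E[⟨L(p,W), L(p,Z)⟩] − ⟨E[L(p,W)], E[L(p,Z)]⟩, and assume Rcov(X_1,X_1) > 0 and Rcov(Y_1,Y_1) > 0. Let Rcov̂_N(W,Z) denote the corresponding sample quantity (1/N) Σ_{k=1}^N ⟨L(p_N, W_k), L(p_N, Z_k)⟩ − ⟨(1/N) Σ L(p_N, W_k), (1/N) Σ L(p_N, Z_k)⟩. Then the sample Riemannian correlation Rcorr̂_N = Rcov̂_N(X,Y) / (√(Rcov̂_N(X,X)) · √(Rcov̂_N(Y,Y))) converges almost surely, as N → ∞, to Rcorr = Rcov(X_1,Y_1) / (√(Rcov(X_1,X_1)) · √(Rcov(Y_1,Y_1))). -/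
open MeasureTheory Filter ProbabilityTheory
open scoped RealInnerProductSpace


/-- The sample Riemannian covariance of the first `N` pairs `(W_k, Z_k)`, with tangent map
`L` evaluated at the base point `q`:
`(1/N) Σ ⟨L(q,W_k), L(q,Z_k)⟩ − ⟨(1/N) Σ L(q,W_k), (1/N) Σ L(q,Z_k)⟩`. -/
noncomputable def sampleRcov {M Ω : Type*} {n : ℕ}
    (L : M × M → EuclideanSpace ℝ (Fin n)) (q : M)
    (W Z : ℕ → Ω → M) (N : ℕ) (ω : Ω) : ℝ :=
  (∑ k ∈ Finset.range N, ⟪L (q, W k ω), L (q, Z k ω)⟫) / N -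
    ⟪(N : ℝ)⁻¹ • ∑ k ∈ Finset.range N, L (q, W k ω),
      (N : ℝ)⁻¹ • ∑ k ∈ Finset.range N, L (q, Z k ω)⟫

/-- The population Riemannian covariance at base point `p`:
`Rcov(W,Z) = E[⟨L(p,W), L(p,Z)⟩] − ⟨E[L(p,W)], E[L(p,Z)]⟩`. -/
noncomputable def popRcov {M Ω : Type*} [MeasurableSpace Ω] {n : ℕ}
    (L : M × M → EuclideanSpace ℝ (Fin n)) (p : M)
    (W Z : Ω → M) (P : Measure Ω) : ℝ :=
  (∫ ω, ⟪L (p, W ω), L (p, Z ω)⟫ ∂P) - ⟪∫ ω, L (p, W ω) ∂P, ∫ ω, L (p, Z ω) ∂P⟫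


/-- Averaged perturbation lemma: if `q N → p`, the average of `f (q N, U k) - f (p, U k)`
tends to zero, by uniform continuity on the compact space. -/
lemma avg_perturb_aux {M A E : Type*} [MetricSpace M] [CompactSpace M]
    [MetricSpace A] [CompactSpace A] [NormedAddCommGroup E] [NormedSpace ℝ E]
    (f : M × A → E) (hf : Continuous f) (p : M) (q : ℕ → M)
    (hq : Tendsto q atTop (nhds p)) (U : ℕ → A) :
    Tendsto (fun N : ℕ => (N : ℝ)⁻¹ • ∑ k ∈ Finset.range N, (f (q N, U k) - f (p, U k)))
      atTop (nhds 0) := by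
  rw [NormedAddCommGroup.tendsto_nhds_zero]
  intro ε hε
  obtain ⟨δ, hδ, hδf⟩ := Metric.uniformContinuous_iff.1
    (CompactSpace.uniformContinuous_of_continuous hf) (ε / 2) (by positivity)
  filter_upwards [hq (Metric.ball_mem_nhds p hδ)] with N hN
  have hterm : ∀ k, ‖f (q N, U k) - f (p, U k)‖ ≤ ε / 2 := by
    intro k
    have hd : dist ((q N, U k) : M × A) (p, U k) < δ := by
      rw [Prod.dist_eq, dist_self]
      exact max_lt hN hδ
    have := hδf hd
    rw [dist_eq_norm] at this
    exact this.le
  have h1 : ‖∑ k ∈ Finset.range N, (f (q N, U k) - f (p, U k))‖ ≤ N * (ε / 2) := by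
    refine (norm_sum_le _ _).trans ?_
    calc ∑ k ∈ Finset.range N, ‖f (q N, U k) - f (p, U k)‖
        ≤ ∑ _k ∈ Finset.range N, (ε / 2) := Finset.sum_le_sum fun k _ => hterm k
      _ = N * (ε / 2) := by simp [Finset.sum_const, mul_comm]
  calc ‖(N : ℝ)⁻¹ • ∑ k ∈ Finset.range N, (f (q N, U k) - f (p, U k))‖
      = (N : ℝ)⁻¹ * ‖∑ k ∈ Finset.range N, (f (q N, U k) - f (p, U k))‖ := by
        rw [norm_smul, norm_inv, Real.norm_natCast]
    _ ≤ (N : ℝ)⁻¹ * (N * (ε / 2)) := by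
        refine mul_le_mul_of_nonneg_left h1 (by positivity)
    _ ≤ ε / 2 := by
        rw [← mul_assoc]
        have h2 : (N : ℝ)⁻¹ * N ≤ 1 := by
          rcases eq_or_ne (N : ℝ) 0 with h | h
          · simp [h]
          · rw [inv_mul_cancel₀ h]
        nlinarith
    _ < ε := by linarith

/-- Strong law of large numbers for continuous functions of an i.i.d. sequence with values
in a compact metric space. -/
lemma slln_comp_aux {B Ω : Type*} [MetricSpace B] [CompactSpace B]
    [MeasurableSpace B] [BorelSpace B]
    [MeasurableSpace Ω] {P : Measure Ω} [IsProbabilityMeasure P]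
    {E : Type*} [NormedAddCommGroup E] [NormedSpace ℝ E] [CompleteSpace E]
    [MeasurableSpace E] [BorelSpace E] [SecondCountableTopology E]
    (U : ℕ → Ω → B) (hU : Measurable (U 0))
    (hindep : iIndepFun U P)
    (hident : ∀ k, IdentDistrib (U k) (U 0) P P)
    (f : B → E) (hf : Continuous f) :
    ∀ᵐ ω ∂P, Tendsto (fun N : ℕ => (N : ℝ)⁻¹ • ∑ k ∈ Finset.range N, f (U k ω))
      atTop (nhds (∫ ω, f (U 0 ω) ∂P)) := by
  have hmeas : Measurable f := hf.measurable
  have hint : Integrable (fun ω => f (U 0 ω)) P := by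
    obtain ⟨C, hC⟩ := isCompact_univ.exists_bound_of_continuousOn hf.continuousOn
    exact (integrable_const C).mono' ((hmeas.comp hU).aestronglyMeasurable)
      (Filter.Eventually.of_forall fun ω => by simpa using hC (U 0 ω) trivial)
  exact strong_law_ae _ hint
    (fun i j hij => (hindep.indepFun hij).comp hmeas hmeas)
    (fun i => (hident i).comp hmeas)

/-- Strong consistency of the sample Riemannian correlation (Corollary 4.4 in trace form):
for a continuous map `L : M × M → ℝⁿ` on a compact metric space, i.i.d. pairs `(X_k, Y_k)`,
random base points `p_N → p` a.s., and positive population variances, the sample Riemannian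
correlation `Rcov̂_N(X,Y)/(√Rcov̂_N(X,X)·√Rcov̂_N(Y,Y))` converges a.s. to
`Rcov(X_1,Y_1)/(√Rcov(X_1,X_1)·√Rcov(Y_1,Y_1))`. -/
theorem sample_riemannian_correlation_strong_consistency
    {M : Type*} [MetricSpace M] [CompactSpace M]
    [MeasurableSpace M] [BorelSpace M]
    (n : ℕ) (L : M × M → EuclideanSpace ℝ (Fin n)) (hL : Continuous L)
    {Ω : Type*} [MeasurableSpace Ω] (P : Measure Ω) [IsProbabilityMeasure P]
    (X Y : ℕ → Ω → M) (hXY : ∀ k, Measurable (fun ω => (X k ω, Y k ω)))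
    (hindep : iIndepFun (fun k ω => (X k ω, Y k ω)) P)
    (hident : ∀ k, IdentDistrib (fun ω => (X k ω, Y k ω)) (fun ω => (X 0 ω, Y 0 ω)) P P)
    (pN : ℕ → Ω → M) (hpN : ∀ N, Measurable (pN N)) (p : M)
    (hconv : ∀ᵐ ω ∂P, Tendsto (fun N => pN N ω) atTop (nhds p))
    (hXX : 0 < popRcov L p (X 0) (X 0) P)
    (hYY : 0 < popRcov L p (Y 0) (Y 0) P) :
    ∀ᵐ ω ∂P, Tendsto
      (fun N : ℕ =>
        sampleRcov L (pN N ω) X Y N ω /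
          (Real.sqrt (sampleRcov L (pN N ω) X X N ω) *
            Real.sqrt (sampleRcov L (pN N ω) Y Y N ω)))
      atTop
      (nhds (popRcov L p (X 0) (Y 0) P /
        (Real.sqrt (popRcov L p (X 0) (X 0) P) *
          Real.sqrt (popRcov L p (Y 0) (Y 0) P)))) := by
  -- continuity facts
  have cpX : Continuous (fun z : M × M => L (p, z.1)) :=
    hL.comp (continuous_const.prodMk continuous_fst)
  have cpY : Continuous (fun z : M × M => L (p, z.2)) :=
    hL.comp (continuous_const.prodMk continuous_snd)
  have cX : Continuous (fun qz : M × (M × M) => L (qz.1, qz.2.1)) :=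
    hL.comp (continuous_fst.prodMk (continuous_fst.comp continuous_snd))
  have cY : Continuous (fun qz : M × (M × M) => L (qz.1, qz.2.2)) :=
    hL.comp (continuous_fst.prodMk (continuous_snd.comp continuous_snd))
  -- strong laws at the fixed base point p
  have s1 := slln_comp_aux (fun k ω => (X k ω, Y k ω)) (hXY 0) hindep hident
    (fun z : M × M => (⟪L (p, z.1), L (p, z.2)⟫ : ℝ)) (cpX.inner cpY)
  have s2 := slln_comp_aux (fun k ω => (X k ω, Y k ω)) (hXY 0) hindep hident
    (fun z : M × M => (⟪L (p, z.1), L (p, z.1)⟫ : ℝ)) (cpX.inner cpX)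
  have s3 := slln_comp_aux (fun k ω => (X k ω, Y k ω)) (hXY 0) hindep hident
    (fun z : M × M => (⟪L (p, z.2), L (p, z.2)⟫ : ℝ)) (cpY.inner cpY)
  have s4 := slln_comp_aux (fun k ω => (X k ω, Y k ω)) (hXY 0) hindep hident
    (fun z : M × M => L (p, z.1)) cpX
  have s5 := slln_comp_aux (fun k ω => (X k ω, Y k ω)) (hXY 0) hindep hident
    (fun z : M × M => L (p, z.2)) cpY
  filter_upwards [hconv, s1, s2, s3, s4, s5] with ω h0 h1 h2 h3 h4 h5
  -- perturbation terms
  have dXY := avg_perturb_aux (fun qz : M × (M × M) => (⟪L (qz.1, qz.2.1), L (qz.1, qz.2.2)⟫ : ℝ))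
    (cX.inner cY) p (fun N => pN N ω) h0 (fun k => (X k ω, Y k ω))
  have dXX := avg_perturb_aux (fun qz : M × (M × M) => (⟪L (qz.1, qz.2.1), L (qz.1, qz.2.1)⟫ : ℝ))
    (cX.inner cX) p (fun N => pN N ω) h0 (fun k => (X k ω, Y k ω))
  have dYY := avg_perturb_aux (fun qz : M × (M × M) => (⟪L (qz.1, qz.2.2), L (qz.1, qz.2.2)⟫ : ℝ))
    (cY.inner cY) p (fun N => pN N ω) h0 (fun k => (X k ω, Y k ω))
  have dX := avg_perturb_aux (fun qz : M × (M × M) => L (qz.1, qz.2.1))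
    cX p (fun N => pN N ω) h0 (fun k => (X k ω, Y k ω))
  have dY := avg_perturb_aux (fun qz : M × (M × M) => L (qz.1, qz.2.2))
    cY p (fun N => pN N ω) h0 (fun k => (X k ω, Y k ω))
  -- combined convergence of averages at the random base point
  have tXY : Tendsto (fun N : ℕ => (N : ℝ)⁻¹ •
      ∑ k ∈ Finset.range N, (⟪L (pN N ω, X k ω), L (pN N ω, Y k ω)⟫ : ℝ)) atTop
      (nhds (∫ ω', (⟪L (p, X 0 ω'), L (p, Y 0 ω')⟫ : ℝ) ∂P)) := by
    have h := dXY.add h1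
    rw [zero_add] at h
    exact h.congr fun N => by rw [Finset.sum_sub_distrib, smul_sub]; abel
  have tXX : Tendsto (fun N : ℕ => (N : ℝ)⁻¹ •
      ∑ k ∈ Finset.range N, (⟪L (pN N ω, X k ω), L (pN N ω, X k ω)⟫ : ℝ)) atTop
      (nhds (∫ ω', (⟪L (p, X 0 ω'), L (p, X 0 ω')⟫ : ℝ) ∂P)) := by
    have h := dXX.add h2
    rw [zero_add] at h
    exact h.congr fun N => by rw [Finset.sum_sub_distrib, smul_sub]; abel
  have tYY : Tendsto (fun N : ℕ => (N : ℝ)⁻¹ •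
      ∑ k ∈ Finset.range N, (⟪L (pN N ω, Y k ω), L (pN N ω, Y k ω)⟫ : ℝ)) atTop
      (nhds (∫ ω', (⟪L (p, Y 0 ω'), L (p, Y 0 ω')⟫ : ℝ) ∂P)) := by
    have h := dYY.add h3
    rw [zero_add] at h
    exact h.congr fun N => by rw [Finset.sum_sub_distrib, smul_sub]; abel
  have tX : Tendsto (fun N : ℕ => (N : ℝ)⁻¹ •
      ∑ k ∈ Finset.range N, L (pN N ω, X k ω)) atTop
      (nhds (∫ ω', L (p, X 0 ω') ∂P)) := by
    have h := dX.add h4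
    rw [zero_add] at h
    exact h.congr fun N => by rw [Finset.sum_sub_distrib, smul_sub]; abel
  have tY : Tendsto (fun N : ℕ => (N : ℝ)⁻¹ •
      ∑ k ∈ Finset.range N, L (pN N ω, Y k ω)) atTop
      (nhds (∫ ω', L (p, Y 0 ω') ∂P)) := by
    have h := dY.add h5
    rw [zero_add] at h
    exact h.congr fun N => by rw [Finset.sum_sub_distrib, smul_sub]; abel
  -- convergence of the three sample covariances
  have SXY : Tendsto (fun N : ℕ => sampleRcov L (pN N ω) X Y N ω) atTop
      (nhds (popRcov L p (X 0) (Y 0) P)) := by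
    have h := tXY.sub (tX.inner tY)
    exact h.congr fun N => by
      simp only [sampleRcov]
      rw [div_eq_inv_mul]
      rfl
  have SXX : Tendsto (fun N : ℕ => sampleRcov L (pN N ω) X X N ω) atTop
      (nhds (popRcov L p (X 0) (X 0) P)) := by
    have h := tXX.sub (tX.inner tX)
    exact h.congr fun N => by
      simp only [sampleRcov]
      rw [div_eq_inv_mul]
      rfl
  have SYY : Tendsto (fun N : ℕ => sampleRcov L (pN N ω) Y Y N ω) atTop
      (nhds (popRcov L p (Y 0) (Y 0) P)) := by
    have h := tYY.sub (tY.inner tY)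
    exact h.congr fun N => by
      simp only [sampleRcov]
      rw [div_eq_inv_mul]
      rfl
  have hne : Real.sqrt (popRcov L p (X 0) (X 0) P) *
      Real.sqrt (popRcov L p (Y 0) (Y 0) P) ≠ 0 :=
    ne_of_gt (mul_pos (Real.sqrt_pos.2 hXX) (Real.sqrt_pos.2 hYY))
  exact SXY.div (SXX.sqrt.mul SYY.sqrt) hne
end
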